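/- arXiv:1804.02091 — 5 statements merged into one kernel-verified Lean document; each statement's English description precedes it below -/
import Mathlib

section
/- The restriction of the extended CMV matrix to the window [1,n-1] is invariant under flipping the signs of all Verblunsky coefficients at the level of characteristic polynomials: det(z·I - E_{[1,n-1]}) = det(z·I - E'_{[1,n-1]}), where E is the extended CMV matrix built from {α_k} and E' is built from {-α_k}. -/
open Polynomial Matrix Complex
open scoped ComplexConjugate

noncomputable section

/-- `ρ_n = sqrt(1 - |α_n|²)`. -/
def rhoC (α : ℤ → ℂ) (n : ℤ) : ℝ := Real.sqrt (1 - ‖α n‖ ^ 2)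

/-- Entry `(i,k)` of the extended CMV matrix with Verblunsky coefficients `α`. -/
def cmvEntry (α : ℤ → ℂ) (i k : ℤ) : ℂ :=
  if i % 2 = 0 then
    if k = i - 1 then conj (α i) * rhoC α (i - 1)
    else if k = i then -conj (α i) * α (i - 1)
    else if k = i + 1 then conj (α (i + 1)) * rhoC α i
    else if k = i + 2 then (rhoC α (i + 1) : ℂ) * rhoC α i
    else 0
  else
    if k = i - 2 then (rhoC α (i - 1) : ℂ) * rhoC α (i - 2)
    else if k = i - 1 then -(rhoC α (i - 1) : ℂ) * α (i - 2)
    else if k = i then -conj (α i) * α (i - 1)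
    else if k = i + 1 then -α (i - 1) * rhoC α i
    else 0

/-- The restriction of the extended CMV matrix to the window `[a, a+m-1]`. -/
def cmvWindow (α : ℤ → ℂ) (a : ℤ) (m : ℕ) : Matrix (Fin m) (Fin m) ℂ :=
  Matrix.of fun i j => cmvEntry α (a + (i : ℕ)) (a + (j : ℕ))

/-- Extension of half-line Verblunsky coefficients, using the convention `α_{-1} = -1`,
under which the half-line CMV matrix is the restriction of the extended one to `[0,∞)`. -/
def halfAlpha (α : ℕ → ℂ) : ℤ → ℂ := fun n => if n < 0 then -1 else α n.toNat

/-- `det(z - X_{[a,a+m-1]})` as a polynomial in `z`, for `X` the extended CMV matrix of `α`. -/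
def windowPoly (α : ℤ → ℂ) (a : ℤ) (m : ℕ) : Polynomial ℂ :=
  ((Polynomial.X : Polynomial ℂ) • (1 : Matrix (Fin m) (Fin m) (Polynomial ℂ)) -
    (cmvWindow α a m).map Polynomial.C).det

/-- `det(z - X_{[a,a+m-1]})` evaluated at a point `z`. -/
def windowDet (α : ℤ → ℂ) (z : ℂ) (a : ℤ) (m : ℕ) : ℂ := (windowPoly α a m).eval z

/-- Reversed polynomial at degree `n`: coefficients are conjugated and reversed
within indices `0, …, n`, so `(revPoly n Q)(z) = zⁿ conj(Q(1/conj z))`. -/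
def revPoly (n : ℕ) (Q : Polynomial ℂ) : Polynomial ℂ :=
  ∑ k ∈ Finset.range (n + 1), Polynomial.C (conj (Q.coeff (n - k))) * Polynomial.X ^ k

/-- The monic orthogonal polynomials `Φ_n` defined by the Szegő recursion
`Φ_{k+1}(z) = z Φ_k(z) - conj(α_k) Φ_k*(z)`, `Φ_0 = 1`. -/
def monicOPUC (α : ℕ → ℂ) : ℕ → Polynomial ℂ
  | 0 => 1
  | n + 1 => Polynomial.X * monicOPUC α n -
      Polynomial.C (conj (α n)) * revPoly n (monicOPUC α n)

/-- The Szegő cocycle matrix `S^z_α = (1/ρ)[[z, -conj α],[-αz, 1]]`. -/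
def szego (z α : ℂ) : Matrix (Fin 2) (Fin 2) ℂ :=
  ((Real.sqrt (1 - ‖α‖ ^ 2) : ℂ))⁻¹ • !![z, -conj α; -α * z, 1]

/-- The `n`-step Szegő transfer matrix `S^z_n = S^z_{α_{n-1}} ⋯ S^z_{α_0}`. -/
def szegoTransfer (α : ℕ → ℂ) (z : ℂ) : ℕ → Matrix (Fin 2) (Fin 2) ℂ
  | 0 => 1
  | n + 1 => szego z (α n) * szegoTransfer α z n

/-- The matrix `P_m` appearing in the cofactor expansion of `det(z - E_{[0,m]})`
along the first column: the minor of `z - E_{[0,m]}` deleting row `1` and column `0`. -/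
def Pmat (α : ℤ → ℂ) (z : ℂ) (m : ℕ) : Matrix (Fin m) (Fin m) ℂ :=
  (z • (1 : Matrix (Fin (m + 1)) (Fin (m + 1)) ℂ) - cmvWindow α 0 (m + 1)).submatrix
    (Fin.succAbove 1) (Fin.succAbove 0)

lemma cmvEntry_neg (α : ℤ → ℂ) (i k : ℤ) :
    cmvEntry (fun n => -α n) i k = (-1:ℂ)^(i+k) * cmvEntry α i k := by
  have hρ : rhoC (fun n => -α n) = rhoC α := by
    funext n; simp [rhoC]
  have key : ∀ c : ℤ, (-1:ℂ)^(2*i + c) = (-1)^c := by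
    intro c
    rw [zpow_add₀ (by norm_num : (-1:ℂ) ≠ 0), _root_.zpow_mul]
    norm_num
  have s0 : (-1:ℂ)^(0:ℤ) = 1 := by norm_num
  have s1 : (-1:ℂ)^(1:ℤ) = -1 := by norm_num
  have sm1 : (-1:ℂ)^(-1:ℤ) = -1 := by norm_num
  have s2 : (-1:ℂ)^(2:ℤ) = 1 := by norm_num
  have sm2 : (-1:ℂ)^(-2:ℤ) = 1 := by norm_num
  simp only [cmvEntry, hρ]
  split_ifs with h h1 h2 h3 h4 h5 h6 h7 h8 <;>
    first
    | (rw [h1, show i + (i-1) = 2*i + (-1) by ring, key, sm1]; (try simp only [map_neg]); ring)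
    | (rw [h2, show i + i = 2*i + 0 by ring, key, s0]; (try simp only [map_neg]); ring)
    | (rw [h3, show i + (i+1) = 2*i + 1 by ring, key, s1]; (try simp only [map_neg]); ring)
    | (rw [h4, show i + (i+2) = 2*i + 2 by ring, key, s2]; ring)
    | (rw [h5, show i + (i-2) = 2*i + (-2) by ring, key, sm2]; ring)
    | (rw [h6, show i + (i-1) = 2*i + (-1) by ring, key, sm1]; (try simp only [map_neg]); ring)
    | (rw [h7, show i + i = 2*i + 0 by ring, key, s0]; (try simp only [map_neg]); ring)
    | (rw [h8, show i + (i+1) = 2*i + 1 by ring, key, s1]; (try simp only [map_neg]); ring)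
    | simp


open Polynomial Matrix in
lemma windowPoly_neg (α : ℤ → ℂ) (m : ℕ) :
    windowPoly (fun k => -α k) 1 m = windowPoly α 1 m := by
  classical
  set D : Matrix (Fin m) (Fin m) (Polynomial ℂ) :=
    Matrix.diagonal (fun i => (-1)^(i:ℕ)) with hD
  have hsq : ∀ a : ℕ, (-1:Polynomial ℂ)^a * (-1:Polynomial ℂ)^a = 1 := by
    intro a; rw [← pow_add, ← two_mul, pow_mul]; norm_num
  have hDD : D * D = 1 := by
    rw [hD, Matrix.diagonal_mul_diagonal]
    have : (fun i : Fin m => (-1:Polynomial ℂ)^(i:ℕ) * (-1:Polynomial ℂ)^(i:ℕ))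
        = fun _ => 1 := funext fun i => hsq i
    rw [this, Matrix.diagonal_one]
  have hz : ∀ n c : ℤ, (-1:ℂ)^(2*n + c) = (-1)^c := by
    intro n c
    rw [zpow_add₀ (by norm_num : (-1:ℂ) ≠ 0), _root_.zpow_mul]
    norm_num
  have hsig : ∀ a b : ℕ, Polynomial.C ((-1:ℂ)^(1 + (a:ℤ) + (1 + (b:ℤ))))
      = (-1:Polynomial ℂ)^a * (-1:Polynomial ℂ)^b := by
    intro a b
    rw [show 1 + (a:ℤ) + (1 + (b:ℤ)) = 2*1 + ((a+b : ℕ) : ℤ) by push_cast; ring,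
      hz, zpow_natCast]
    simp [_root_.map_mul, map_pow, pow_add]
  have key : ((X : Polynomial ℂ) • (1:Matrix (Fin m) (Fin m) (Polynomial ℂ)) -
        (cmvWindow (fun k => -α k) 1 m).map Polynomial.C)
      = D * ((X : Polynomial ℂ) • (1:Matrix (Fin m) (Fin m) (Polynomial ℂ)) -
        (cmvWindow α 1 m).map Polynomial.C) * D := by
    ext i j : 1
    rw [Matrix.mul_diagonal, Matrix.diagonal_mul]
    simp only [Matrix.sub_apply, Matrix.smul_apply, Matrix.map_apply, cmvWindow,
      Matrix.of_apply, cmvEntry_neg, _root_.map_mul, smul_eq_mul]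
    rw [hsig]
    by_cases h : i = j
    · subst h
      simp only [Matrix.one_apply_eq]
      linear_combination (-(X : Polynomial ℂ)) * hsq (i:ℕ)
    · rw [Matrix.one_apply_ne h]
      ring
  unfold windowPoly
  rw [key, Matrix.det_mul, Matrix.det_mul]
  have h1 : D.det * D.det = 1 := by rw [← Matrix.det_mul, hDD, Matrix.det_one]
  rw [mul_comm, ← mul_assoc, h1, one_mul]

theorem windowDet_sign_flip_invariant (α : ℤ → ℂ) (hα : ∀ k, ‖α k‖ < 1)
    (m : ℕ) (z : ℂ) :
    windowDet α z 1 m = windowDet (fun k => -α k) z 1 m := by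
  unfold windowDet
  rw [windowPoly_neg]
end
end

section
/- With P_{n-1} the (n-1)×(n-1) matrix arising in the cofactor expansion of det(z - E_{[0,n-1]}) along the first column (explicitly given in terms of α_1,...,α_{n-1} and ρ_0,...,ρ_{n-1}), and P'_{n-1} the corresponding matrix with all α_j replaced by -α_j, one has det P_{n-1} = -det P'_{n-1}. -/
open Polynomial Matrix Complex
open scoped ComplexConjugate

noncomputable section

def sg (n : ℤ) : ℂ := if Even n then 1 else -1

lemma sg_mul_self (n : ℤ) : sg n * sg n = 1 := by
  unfold sg; split_ifs <;> ring

lemma sg_add_one (n : ℤ) : sg (n + 1) = -sg n := by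
  unfold sg
  by_cases h : Even n <;> simp [h, Int.even_add_one]

lemma sg_sub_one (n : ℤ) : sg (n - 1) = -sg n := by
  have := sg_add_one (n - 1)
  rw [sub_add_cancel] at this
  rw [this]; ring

lemma sg_succ (n : ℤ) : sg n * sg (n + 1) = -1 := by
  rw [sg_add_one]
  have := sg_mul_self n; linear_combination -this

lemma sg_pred (n : ℤ) : sg n * sg (n - 1) = -1 := by
  rw [sg_sub_one]
  have := sg_mul_self n; linear_combination -this

lemma sg_add_two (n : ℤ) : sg n * sg (n + 2) = 1 := by
  have h : n + 2 = (n + 1) + 1 := by ring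
  rw [h, sg_add_one, sg_add_one, neg_neg]; exact sg_mul_self n

lemma sg_sub_two (n : ℤ) : sg n * sg (n - 2) = 1 := by
  have h : n - 2 = (n - 1) - 1 := by ring
  rw [h, sg_sub_one, sg_sub_one, neg_neg]; exact sg_mul_self n

lemma cmv_neg (α : ℤ → ℂ) (i k : ℤ) :
    cmvEntry (fun j => -α j) i k = sg i * sg k * cmvEntry α i k := by
  have hrho : rhoC (fun j => -α j) = rhoC α := by
    funext n; simp [rhoC]
  unfold cmvEntry
  rw [hrho]
  split_ifs <;> subst_vars <;> (try simp only [map_neg, neg_neg]) <;>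
    first
      | (rw [sg_pred]; ring)
      | (rw [sg_mul_self]; ring)
      | (rw [sg_succ]; ring)
      | (rw [sg_add_two]; ring)
      | (rw [sg_sub_two]; ring)
      | ring

theorem Pmat_det_sign_flip (α : ℤ → ℂ) (hα : ∀ k, ‖α k‖ < 1)
    (m : ℕ) (hm : 1 ≤ m) (z : ℂ) :
    (Pmat α z m).det = -(Pmat (fun k => -α k) z m).det := by
  haveI : NeZero m := ⟨by omega⟩
  have key : Pmat (fun k => -α k) z m =
      Matrix.diagonal (fun i => sg (((Fin.succAbove (1 : Fin (m+1)) i : Fin (m+1)) : ℕ) : ℤ)) *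
        Pmat α z m *
        Matrix.diagonal (fun j => sg (((Fin.succAbove (0 : Fin (m+1)) j : Fin (m+1)) : ℕ) : ℤ)) := by
    ext i j
    simp only [Matrix.mul_diagonal, Matrix.diagonal_mul, Pmat, Matrix.submatrix_apply,
      Matrix.sub_apply, Matrix.smul_apply, Matrix.one_apply, cmvWindow, Matrix.of_apply,
      zero_add, smul_eq_mul]
    rw [cmv_neg]
    by_cases h : Fin.succAbove (1 : Fin (m+1)) i = Fin.succAbove (0 : Fin (m+1)) j
    · have hv : (((Fin.succAbove (1 : Fin (m+1)) i : Fin (m+1)) : ℕ) : ℤ) =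
          (((Fin.succAbove (0 : Fin (m+1)) j : Fin (m+1)) : ℕ) : ℤ) := by rw [h]
      rw [if_pos h, hv]
      have hs := sg_mul_self (((Fin.succAbove (0 : Fin (m+1)) j : Fin (m+1)) : ℕ) : ℤ)
      linear_combination (-z) * hs
    · rw [if_neg h]
      ring
  rw [key, Matrix.det_mul, Matrix.det_mul, Matrix.det_diagonal, Matrix.det_diagonal]
  have h1v : ((1 : Fin (m+1)) : ℕ) = 1 := by
    rw [Fin.val_one']; exact Nat.mod_eq_of_lt (by omega)
  have hsa0 : ∀ i : Fin m, ((Fin.succAbove (0 : Fin (m+1)) i : Fin (m+1)) : ℕ) = (i : ℕ) + 1 := by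
    intro i
    rw [Fin.succAbove_of_le_castSucc]
    · exact Fin.val_succ i
    · exact Fin.zero_le _
  have hprod : (∏ i, sg (((Fin.succAbove (1 : Fin (m+1)) i : Fin (m+1)) : ℕ) : ℤ)) *
      (∏ j, sg (((Fin.succAbove (0 : Fin (m+1)) j : Fin (m+1)) : ℕ) : ℤ)) = -1 := by
    rw [← Finset.prod_mul_distrib]
    have hval : ∀ i : Fin m,
        sg (((Fin.succAbove (1 : Fin (m+1)) i : Fin (m+1)) : ℕ) : ℤ) *
          sg (((Fin.succAbove (0 : Fin (m+1)) i : Fin (m+1)) : ℕ) : ℤ) =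
        if i = 0 then -1 else 1 := by
      intro i
      by_cases hi : i = 0
      · subst hi
        have hA : ((Fin.succAbove (1 : Fin (m+1)) (0 : Fin m) : Fin (m+1)) : ℕ) = 0 := by
          rw [Fin.succAbove_of_castSucc_lt]
          · rfl
          · rw [Fin.lt_def, h1v]
            simp [Fin.castSucc]
        rw [hA, hsa0, if_pos rfl]
        show sg 0 * sg ((0 : ℕ) + 1 : ℕ) = -1
        have := sg_succ 0
        simpa using this
      · have hB : ((Fin.succAbove (1 : Fin (m+1)) i : Fin (m+1)) : ℕ) = (i : ℕ) + 1 := by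
          rw [Fin.succAbove_of_le_castSucc]
          · exact Fin.val_succ i
          · rw [Fin.le_def, h1v]
            have : (i : ℕ) ≠ 0 := fun h => hi (Fin.ext h)
            simp [Fin.castSucc]
            omega
        rw [hB, hsa0, if_neg hi]
        exact sg_mul_self _
    rw [Finset.prod_congr rfl (fun i _ => hval i)]
    rw [Finset.prod_ite_eq' Finset.univ (0 : Fin m) (fun _ => (-1 : ℂ))]
    simp
  calc (Pmat α z m).det
      = -((∏ i, sg (((Fin.succAbove (1 : Fin (m+1)) i : Fin (m+1)) : ℕ) : ℤ)) *
          (∏ j, sg (((Fin.succAbove (0 : Fin (m+1)) j : Fin (m+1)) : ℕ) : ℤ)) *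
          (Pmat α z m).det) := by
        rw [hprod]; ring
    _ = -((∏ i, sg (((Fin.succAbove (1 : Fin (m+1)) i : Fin (m+1)) : ℕ) : ℤ)) *
          (Pmat α z m).det *
          ∏ j, sg (((Fin.succAbove (0 : Fin (m+1)) j : Fin (m+1)) : ℕ) : ℤ)) := by ring
end
end

section
/- For the extended CMV matrix E with Verblunsky coefficients {α_k}_{k∈ℤ} and 1 ≤ k < n-1, the characteristic determinant satisfies the expansion det(z - E_{[k,n-1]}) = (z + conj(α_k) α_{k-1}) det(z - E_{[k+1,n-1]}) + conj(α_{k+1}) α_{k-1} ρ_k² det(z - E_{[k+2,n-1]}) + ... + conj(α_{n-1}) α_{k-1} ∏_{j=k}^{n-2} ρ_j². -/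
open Polynomial Matrix Complex
open scoped ComplexConjugate

noncomputable section

namespace CMVAux

variable (α : ℤ → ℂ) (z : ℂ)

/- ### entry lemmas -/

lemma cmv_diag (i : ℤ) : cmvEntry α i i = -conj (α i) * α (i - 1) := by
  unfold cmvEntry; split_ifs <;> first | rfl | (exfalso; omega)

lemma cmv_right1_even (a : ℤ) (ha : a % 2 = 0) :
    cmvEntry α a (a + 1) = conj (α (a + 1)) * (rhoC α a : ℂ) := by
  unfold cmvEntry; split_ifs <;> first | rfl | (exfalso; omega)

lemma cmv_right1_odd (a : ℤ) (ha : a % 2 = 1) :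
    cmvEntry α a (a + 1) = -α (a - 1) * (rhoC α a : ℂ) := by
  unfold cmvEntry; split_ifs <;> first | rfl | (exfalso; omega)

lemma cmv_right2_even (a : ℤ) (ha : a % 2 = 0) :
    cmvEntry α a (a + 2) = (rhoC α (a + 1) : ℂ) * (rhoC α a : ℂ) := by
  unfold cmvEntry; split_ifs <;> first | rfl | (exfalso; omega)

lemma cmv_left1_even (a : ℤ) (ha : a % 2 = 0) :
    cmvEntry α (a + 1) a = -(rhoC α a : ℂ) * α (a - 1) := by
  unfold cmvEntry
  rw [show a + 1 - 1 = a from by ring, show a + 1 - 2 = a - 1 from by ring]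
  split_ifs <;> first | rfl | (exfalso; omega)

lemma cmv_left1_odd (a : ℤ) (ha : a % 2 = 1) :
    cmvEntry α (a + 1) a = conj (α (a + 1)) * (rhoC α a : ℂ) := by
  unfold cmvEntry
  rw [show a + 1 - 1 = a from by ring]
  split_ifs <;> first | rfl | (exfalso; omega)

lemma cmv_left2_odd (a : ℤ) (ha : a % 2 = 1) :
    cmvEntry α (a + 2) a = (rhoC α (a + 1) : ℂ) * (rhoC α a : ℂ) := by
  unfold cmvEntry
  rw [show a + 2 - 1 = a + 1 from by ring, show a + 2 - 2 = a from by ring]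
  split_ifs <;> first | rfl | (exfalso; omega)

lemma cmv_zero_right (i j : ℤ) (h : i + 3 ≤ j) : cmvEntry α i j = 0 := by
  unfold cmvEntry; split_ifs <;> first | rfl | (exfalso; omega)

lemma cmv_zero_right_odd (i j : ℤ) (hi : i % 2 = 1) (h : i + 2 ≤ j) : cmvEntry α i j = 0 := by
  unfold cmvEntry; split_ifs <;> first | rfl | (exfalso; omega)

lemma cmv_zero_left (i j : ℤ) (h : j + 3 ≤ i) : cmvEntry α i j = 0 := by
  unfold cmvEntry; split_ifs <;> first | rfl | (exfalso; omega)

lemma cmv_zero_left_evencol (i j : ℤ) (hj : j % 2 = 0) (h : j + 2 ≤ i) : cmvEntry α i j = 0 := by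
  unfold cmvEntry; split_ifs <;> first | rfl | (exfalso; omega)

/- ### matrices -/

def cent (i j : ℤ) : ℂ := (if i = j then z else 0) - cmvEntry α i j

def Dm (a : ℤ) (s : ℕ) : Matrix (Fin s) (Fin s) ℂ :=
  Matrix.of fun i j => cent α z (a + (i : ℕ)) (a + (j : ℕ))

def skip (i : ℕ) : ℤ := if i = 0 then 0 else (i : ℤ) + 1

def Pm (a : ℤ) (s : ℕ) : Matrix (Fin s) (Fin s) ℂ :=
  Matrix.of fun i j => cent α z (a + skip (i : ℕ)) (a + 1 + (j : ℕ))

def Rm (a : ℤ) (s : ℕ) : Matrix (Fin s) (Fin s) ℂ :=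
  Matrix.of fun i j => cent α z (a + 1 + (i : ℕ)) (a + skip (j : ℕ))

def Tf : ℕ → ℤ → ℂ
  | 0, _ => 0
  | t + 1, a => conj (α a) * (Dm α z (a + 1) t).det + ((rhoC α a : ℂ)) ^ 2 * Tf t (a + 1)

lemma cent_diag (i : ℤ) : cent α z i i = z + conj (α i) * α (i - 1) := by
  simp [cent, cmv_diag]

lemma cent_ne (i j : ℤ) (h : i ≠ j) : cent α z i j = -cmvEntry α i j := by
  simp [cent, h]

lemma windowDet_eq (a : ℤ) (m : ℕ) : windowDet α z a m = (Dm α z a m).det := by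
  unfold windowDet windowPoly
  rw [show (Polynomial.eval z) = (Polynomial.evalRingHom z : Polynomial ℂ → ℂ) from rfl,
    RingHom.map_det]
  congr 1
  ext i j
  simp [Matrix.map_apply, Matrix.sub_apply, Matrix.smul_apply, Matrix.one_apply,
    cmvWindow, Dm, cent]
  split_ifs <;> simp_all [Fin.val_inj]

lemma coe_succAbove_one {s : ℕ} (i : Fin (s + 1)) :
    ((((1 : Fin (s + 2)).succAbove i : Fin (s + 2)) : ℕ) : ℤ) = skip (i : ℕ) := by
  rcases Nat.eq_zero_or_pos (i : ℕ) with h | h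
  · have : i = 0 := by ext; simpa using h
    subst this
    simp [Fin.succAbove, skip]
  · have h1 : ¬ (i.castSucc < (1 : Fin (s + 2))) := by
      intro hlt; rw [Fin.lt_def, Fin.coe_castSucc, Fin.val_one] at hlt; omega
    simp [Fin.succAbove, h1, skip, show (i:ℕ) ≠ 0 from by omega]


/- ### skip lemmas -/

lemma skip_zero : skip 0 = 0 := rfl

lemma skip_succ (i : ℕ) : skip (i + 1) = (i : ℤ) + 2 := by
  simp [skip]; ring

/- ### submatrix identifications -/

lemma subm1 (a : ℤ) (s : ℕ) :
    (Dm α z a (s + 2)).submatrix Fin.succ Fin.succ = Dm α z (a + 1) (s + 1) := by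
  ext i j
  simp only [Matrix.submatrix_apply, Dm, Matrix.of_apply, Fin.val_succ]
  congr 1 <;> push_cast <;> ring

lemma subm2 (a : ℤ) (s : ℕ) :
    (Dm α z a (s + 2)).submatrix ((1 : Fin (s + 2)).succAbove) Fin.succ = Pm α z a (s + 1) := by
  ext i j
  simp only [Matrix.submatrix_apply, Dm, Pm, Matrix.of_apply, Fin.val_succ]
  rw [coe_succAbove_one]
  congr 1 <;> push_cast <;> ring

lemma subm3 (a : ℤ) (s : ℕ) :
    (Dm α z a (s + 2)).submatrix Fin.succ ((1 : Fin (s + 2)).succAbove) = Rm α z a (s + 1) := by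
  ext i j
  simp only [Matrix.submatrix_apply, Dm, Rm, Matrix.of_apply, Fin.val_succ]
  rw [coe_succAbove_one]
  congr 1 <;> push_cast <;> ring

lemma subm4 (a : ℤ) (s : ℕ) :
    (Pm α z a (s + 2)).submatrix Fin.succ Fin.succ = Dm α z (a + 2) (s + 1) := by
  ext i j
  simp only [Matrix.submatrix_apply, Dm, Pm, Matrix.of_apply, Fin.val_succ]
  rw [skip_succ]
  congr 1 <;> push_cast <;> ring

lemma subm5 (a : ℤ) (s : ℕ) :
    (Pm α z a (s + 2)).submatrix Fin.succ ((1 : Fin (s + 2)).succAbove) = Rm α z (a + 1) (s + 1) := by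
  ext i j
  simp only [Matrix.submatrix_apply, Pm, Rm, Matrix.of_apply, Fin.val_succ]
  rw [skip_succ, coe_succAbove_one]
  congr 1 <;> push_cast <;> ring

lemma subm6 (a : ℤ) (s : ℕ) :
    (Rm α z a (s + 2)).submatrix Fin.succ Fin.succ = Dm α z (a + 2) (s + 1) := by
  ext i j
  simp only [Matrix.submatrix_apply, Dm, Rm, Matrix.of_apply, Fin.val_succ]
  rw [skip_succ]
  congr 1 <;> push_cast <;> ring

lemma subm7 (a : ℤ) (s : ℕ) :
    (Rm α z a (s + 2)).submatrix ((1 : Fin (s + 2)).succAbove) Fin.succ = Pm α z (a + 1) (s + 1) := by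
  ext i j
  simp only [Matrix.submatrix_apply, Pm, Rm, Matrix.of_apply, Fin.val_succ]
  rw [skip_succ, coe_succAbove_one]
  congr 1 <;> push_cast <;> ring

/- ### expansion lemmas -/

lemma lemA (a : ℤ) (ha : a % 2 = 0) (s : ℕ) :
    (Dm α z a (s + 2)).det
      = (z + conj (α a) * α (a - 1)) * (Dm α z (a + 1) (s + 1)).det
        - α (a - 1) * (rhoC α a : ℂ) * (Pm α z a (s + 1)).det := by
  have h00 : Dm α z a (s + 2) 0 0 = z + conj (α a) * α (a - 1) := by
    simp [Dm, cent_diag]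
  have h10 : Dm α z a (s + 2) 1 0 = (rhoC α a : ℂ) * α (a - 1) := by
    simp only [Dm, Matrix.of_apply, Fin.val_one, Fin.val_zero, Nat.cast_one, Nat.cast_zero,
      add_zero]
    rw [cent_ne α z _ _ (by omega), cmv_left1_even α a ha]
    ring
  have htail : ∀ i : Fin s, Dm α z a (s + 2) i.succ.succ 0 = 0 := by
    intro i
    simp only [Dm, Matrix.of_apply, Fin.val_succ, Fin.val_zero, Nat.cast_zero, add_zero]
    rw [cent_ne α z _ _ (by push_cast; omega), cmv_zero_left_evencol α _ _ ha (by push_cast; omega)]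
    ring
  rw [Matrix.det_succ_column_zero, Fin.sum_univ_succ, Fin.sum_univ_succ,
    Finset.sum_eq_zero (fun (i : Fin s) _ => by rw [htail i]; ring)]
  simp only [Fin.succ_zero_eq_one, Fin.val_zero, Fin.val_one, Fin.succAbove_zero,
    pow_zero, pow_one, h00, h10, subm1, subm2]
  ring

lemma lemA' (a : ℤ) (ha : a % 2 = 1) (s : ℕ) :
    (Dm α z a (s + 2)).det
      = (z + conj (α a) * α (a - 1)) * (Dm α z (a + 1) (s + 1)).det
        - α (a - 1) * (rhoC α a : ℂ) * (Rm α z a (s + 1)).det := by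
  have h00 : Dm α z a (s + 2) 0 0 = z + conj (α a) * α (a - 1) := by
    simp [Dm, cent_diag]
  have h01 : Dm α z a (s + 2) 0 1 = (rhoC α a : ℂ) * α (a - 1) := by
    simp only [Dm, Matrix.of_apply, Fin.val_one, Fin.val_zero, Nat.cast_one, Nat.cast_zero,
      add_zero]
    rw [cent_ne α z _ _ (by omega), cmv_right1_odd α a ha]
    ring
  have htail : ∀ j : Fin s, Dm α z a (s + 2) 0 j.succ.succ = 0 := by
    intro j
    simp only [Dm, Matrix.of_apply, Fin.val_succ, Fin.val_zero, Nat.cast_zero, add_zero]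
    rw [cent_ne α z _ _ (by push_cast; omega), cmv_zero_right_odd α _ _ ha (by push_cast; omega)]
    ring
  rw [Matrix.det_succ_row_zero, Fin.sum_univ_succ, Fin.sum_univ_succ,
    Finset.sum_eq_zero (fun (j : Fin s) _ => by rw [htail j]; ring)]
  simp only [Fin.succ_zero_eq_one, Fin.val_zero, Fin.val_one, Fin.succAbove_zero,
    pow_zero, pow_one, h00, h01, subm1, subm3]
  ring

lemma lemB (a : ℤ) (ha : a % 2 = 0) (s : ℕ) :
    (Pm α z a (s + 2)).det
      = -(conj (α (a + 1)) * (rhoC α a : ℂ)) * (Dm α z (a + 2) (s + 1)).det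
        + (rhoC α (a + 1) : ℂ) * (rhoC α a : ℂ) * (Rm α z (a + 1) (s + 1)).det := by
  have h00 : Pm α z a (s + 2) 0 0 = -(conj (α (a + 1)) * (rhoC α a : ℂ)) := by
    simp only [Pm, Matrix.of_apply, Fin.val_zero, skip_zero, add_zero, Nat.cast_zero]
    rw [cent_ne α z _ _ (by omega), cmv_right1_even α a ha]

  have h01 : Pm α z a (s + 2) 0 1 = -((rhoC α (a + 1) : ℂ) * (rhoC α a : ℂ)) := by
    simp only [Pm, Matrix.of_apply, Fin.val_zero, Fin.val_one, skip_zero, add_zero,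
      Nat.cast_zero, Nat.cast_one]
    rw [show a + 1 + 1 = a + 2 from by ring, cent_ne α z _ _ (by omega),
      cmv_right2_even α a ha]

  have htail : ∀ j : Fin s, Pm α z a (s + 2) 0 j.succ.succ = 0 := by
    intro j
    simp only [Pm, Matrix.of_apply, Fin.val_succ, Fin.val_zero, skip_zero, add_zero,
      Nat.cast_zero]
    rw [cent_ne α z _ _ (by push_cast; omega), cmv_zero_right α _ _ (by push_cast; omega)]
    ring
  rw [Matrix.det_succ_row_zero, Fin.sum_univ_succ, Fin.sum_univ_succ,
    Finset.sum_eq_zero (fun (j : Fin s) _ => by rw [htail j]; ring)]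
  simp only [Fin.succ_zero_eq_one, Fin.val_zero, Fin.val_one, Fin.succAbove_zero,
    pow_zero, pow_one, h00, h01, subm4, subm5]
  ring

lemma lemB' (a : ℤ) (ha : a % 2 = 1) (s : ℕ) :
    (Rm α z a (s + 2)).det
      = -(conj (α (a + 1)) * (rhoC α a : ℂ)) * (Dm α z (a + 2) (s + 1)).det
        + (rhoC α (a + 1) : ℂ) * (rhoC α a : ℂ) * (Pm α z (a + 1) (s + 1)).det := by
  have h00 : Rm α z a (s + 2) 0 0 = -(conj (α (a + 1)) * (rhoC α a : ℂ)) := by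
    simp only [Rm, Matrix.of_apply, Fin.val_zero, skip_zero, add_zero, Nat.cast_zero]
    rw [cent_ne α z _ _ (by omega), cmv_left1_odd α a ha]

  have h10 : Rm α z a (s + 2) 1 0 = -((rhoC α (a + 1) : ℂ) * (rhoC α a : ℂ)) := by
    simp only [Rm, Matrix.of_apply, Fin.val_zero, Fin.val_one, skip_zero, add_zero,
      Nat.cast_zero, Nat.cast_one]
    rw [show a + 1 + 1 = a + 2 from by ring, cent_ne α z _ _ (by omega),
      cmv_left2_odd α a ha]

  have htail : ∀ i : Fin s, Rm α z a (s + 2) i.succ.succ 0 = 0 := by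
    intro i
    simp only [Rm, Matrix.of_apply, Fin.val_succ, Fin.val_zero, skip_zero, add_zero,
      Nat.cast_zero]
    rw [cent_ne α z _ _ (by push_cast; omega), cmv_zero_left α _ _ (by push_cast; omega)]
    ring
  rw [Matrix.det_succ_column_zero, Fin.sum_univ_succ, Fin.sum_univ_succ,
    Finset.sum_eq_zero (fun (i : Fin s) _ => by rw [htail i]; ring)]
  simp only [Fin.succ_zero_eq_one, Fin.val_zero, Fin.val_one, Fin.succAbove_zero,
    pow_zero, pow_one, h00, h10, subm6, subm7]
  ring


/- ### induction for P and R -/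

lemma PRT (s : ℕ) : ∀ a : ℤ,
    (a % 2 = 0 → (Pm α z a (s + 1)).det = -(rhoC α a : ℂ) * Tf α z (s + 1) (a + 1)) ∧
    (a % 2 = 1 → (Rm α z a (s + 1)).det = -(rhoC α a : ℂ) * Tf α z (s + 1) (a + 1)) := by
  induction s with
  | zero =>
    intro a
    constructor
    · intro ha
      rw [Matrix.det_fin_one]
      have h : Pm α z a 1 0 0 = -(conj (α (a + 1)) * (rhoC α a : ℂ)) := by
        simp only [Pm, Matrix.of_apply, Fin.val_zero, skip_zero, add_zero, Nat.cast_zero]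
        rw [cent_ne α z _ _ (by omega), cmv_right1_even α a ha]
      rw [h]
      simp only [Tf, Matrix.det_fin_zero]
      ring
    · intro ha
      rw [Matrix.det_fin_one]
      have h : Rm α z a 1 0 0 = -(conj (α (a + 1)) * (rhoC α a : ℂ)) := by
        simp only [Rm, Matrix.of_apply, Fin.val_zero, skip_zero, add_zero, Nat.cast_zero]
        rw [cent_ne α z _ _ (by omega), cmv_left1_odd α a ha]
      rw [h]
      simp only [Tf, Matrix.det_fin_zero]
      ring
  | succ s ih =>
    intro a
    constructor
    · intro ha
      rw [lemB α z a ha s, ((ih (a + 1)).2 (by omega))]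
      simp only [Tf]
      rw [show a + 1 + 1 = a + 2 from by ring]
      ring
    · intro ha
      rw [lemB' α z a ha s, ((ih (a + 1)).1 (by omega))]
      simp only [Tf]
      rw [show a + 1 + 1 = a + 2 from by ring]
      ring

/- ### main recursion -/

lemma lemC (a : ℤ) (s : ℕ) :
    (Dm α z a (s + 2)).det
      = (z + conj (α a) * α (a - 1)) * (Dm α z (a + 1) (s + 1)).det
        + α (a - 1) * (rhoC α a : ℂ) ^ 2 * Tf α z (s + 1) (a + 1) := by
  rcases Int.emod_two_eq a with ha | ha
  · rw [lemA α z a ha s, ((PRT α z s a).1 ha)]; ring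
  · rw [lemA' α z a ha s, ((PRT α z s a).2 ha)]; ring

/- ### sum form of Tf -/

lemma Tsum : ∀ (t : ℕ) (a : ℤ), Tf α z t a =
    ∑ i ∈ Finset.range t,
      conj (α (a + (i : ℕ))) * (∏ j ∈ Finset.range i, ((rhoC α (a + (j : ℕ)) : ℂ)) ^ 2) *
        (Dm α z (a + (i : ℕ) + 1) (t - 1 - i)).det := by
  intro t
  induction t with
  | zero => intro a; simp [Tf]
  | succ t ih =>
    intro a
    rw [Finset.sum_range_succ']
    simp only [Tf, ih (a + 1), Finset.mul_sum]
    rw [add_comm ((conj (α a)) * (Dm α z (a + 1) t).det)]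
    congr 1
    · refine Finset.sum_congr rfl fun i _ => ?_
      rw [Finset.prod_range_succ',
        show t + 1 - 1 - (i + 1) = t - 1 - i from by omega]
      have e : ∀ x : ℕ, a + (x : ℤ) + 1 = 1 + a + x := fun x => by push_cast; ring
      simp only [e]
      push_cast
      ring_nf
    · rw [show t + 1 - 1 - 0 = t from by omega]
      push_cast
      ring_nf

end CMVAux

theorem windowDet_cofactor_expansion (α : ℤ → ℂ) (hα : ∀ j, ‖α j‖ < 1)
    (n k : ℕ) (hk : 1 ≤ k) (hkn : k < n - 1) (z : ℂ) :
    windowDet α z k (n - k) =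
      (z + conj (α k) * α ((k : ℤ) - 1)) * windowDet α z (k + 1) (n - 1 - k) +
      ∑ m ∈ Finset.Icc (k + 1) (n - 1),
        conj (α m) * α ((k : ℤ) - 1) *
          (∏ j ∈ Finset.Icc k (m - 1), (rhoC α j : ℂ) ^ 2) *
          windowDet α z ((m : ℤ) + 1) (n - 1 - m) := by
  have hn : k + 2 ≤ n := by omega
  have h1 : n - k = (n - k - 2) + 2 := by omega
  set s : ℕ := n - k - 2 with hs
  have h2 : n - 1 - k = s + 1 := by omega
  rw [CMVAux.windowDet_eq, h1, CMVAux.lemC α z (k : ℤ) s]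
  rw [CMVAux.windowDet_eq α z ((k : ℤ) + 1) (n - 1 - k), h2]
  congr 1
  rw [← Finset.Ico_add_one_right_eq_Icc, Finset.sum_Ico_eq_sum_range,
    show n - 1 + 1 - (k + 1) = s + 1 from by omega,
    CMVAux.Tsum α z (s + 1) ((k : ℤ) + 1), Finset.mul_sum]
  refine Finset.sum_congr rfl fun i hi => ?_
  have hi' : i ≤ s := by
    have := Finset.mem_range.mp hi; omega
  rw [show k + 1 + i - 1 = k + i from by omega]
  rw [CMVAux.windowDet_eq α z _ _]
  rw [show n - 1 - (k + 1 + i) = s - i from by omega,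
    show s + 1 - 1 - i = s - i from by omega]
  rw [← Finset.Ico_add_one_right_eq_Icc, Finset.prod_Ico_eq_prod_range,
    show k + i + 1 - k = i + 1 from by omega, Finset.prod_range_succ']
  push_cast
  ring_nf
end
end

section
/- The sum of the monic orthogonal polynomial and the second kind polynomial satisfies Φ_n(z) + Ψ_n(z) = 2z · det(z·I - E_{[1,n-1]}), where E_{[1,n-1]} is the restriction of the extended CMV matrix to indices 1,...,n-1. -/
open Polynomial Matrix Complex
open scoped ComplexConjugate

noncomputable section

namespace PhiAddPsi

def vecD (α : ℤ → ℂ) (s : ℕ) : Fin s → ℂ := fun q =>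
  if (q : ℕ) + 1 = s then α ((q : ℕ) : ℤ)
  else if (q : ℕ) + 2 = s then -((rhoC α (((q : ℕ) : ℤ) + 1) : ℝ) : ℂ)
  else 0

def Wmat (α : ℤ → ℂ) (z : ℂ) (s : ℕ) : Matrix (Fin s) (Fin s) ℂ :=
  z • 1 - cmvWindow α 1 s

lemma cmvEntry_far (α : ℤ → ℂ) {i k : ℤ} (h : k < i - 2 ∨ i + 2 < k) :
    cmvEntry α i k = 0 := by
  unfold cmvEntry
  split_ifs <;> first | rfl | (exfalso; omega)

lemma cmvEntry_zero (α : ℤ → ℂ) {i k : ℤ}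
    (h : (i % 2 = 0 ∧ (k < i - 1 ∨ i + 2 < k)) ∨ (i % 2 = 1 ∧ (k < i - 2 ∨ i + 1 < k))) :
    cmvEntry α i k = 0 := by
  unfold cmvEntry
  split_ifs <;> first | rfl | (exfalso; omega)

lemma cmvEntry_diag (α : ℤ → ℂ) (i : ℤ) :
    cmvEntry α i i = -conj (α i) * α (i - 1) := by
  unfold cmvEntry
  split_ifs <;> first | rfl | (exfalso; omega)

lemma cmvEntry_odd_two_below (α : ℤ → ℂ) {i k : ℤ} (hi : ¬ i % 2 = 0) (hk : k = i - 2) :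
    cmvEntry α i k = (rhoC α (i - 1) : ℂ) * rhoC α (i - 2) := by
  unfold cmvEntry; rw [if_neg hi, if_pos hk]

lemma cmvEntry_odd_one_below (α : ℤ → ℂ) {i k : ℤ} (hi : ¬ i % 2 = 0) (hk : k = i - 1) :
    cmvEntry α i k = -(rhoC α (i - 1) : ℂ) * α (i - 2) := by
  unfold cmvEntry; rw [if_neg hi, if_neg (by omega), if_pos hk]

lemma cmvEntry_odd_one_above (α : ℤ → ℂ) {i k : ℤ} (hi : ¬ i % 2 = 0) (hk : k = i + 1) :
    cmvEntry α i k = -α (i - 1) * rhoC α i := by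
  unfold cmvEntry; rw [if_neg hi, if_neg (by omega), if_neg (by omega), if_neg (by omega), if_pos hk]

lemma cmvEntry_even_one_below (α : ℤ → ℂ) {i k : ℤ} (hi : i % 2 = 0) (hk : k = i - 1) :
    cmvEntry α i k = conj (α i) * rhoC α (i - 1) := by
  unfold cmvEntry; rw [if_pos hi, if_pos hk]

lemma cmvEntry_even_one_above (α : ℤ → ℂ) {i k : ℤ} (hi : i % 2 = 0) (hk : k = i + 1) :
    cmvEntry α i k = conj (α (i + 1)) * rhoC α i := by
  unfold cmvEntry; rw [if_pos hi, if_neg (by omega), if_neg (by omega), if_pos hk]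

lemma cmvEntry_even_two_above (α : ℤ → ℂ) {i k : ℤ} (hi : i % 2 = 0) (hk : k = i + 2) :
    cmvEntry α i k = (rhoC α (i + 1) : ℂ) * rhoC α i := by
  unfold cmvEntry; rw [if_pos hi, if_neg (by omega), if_neg (by omega), if_neg (by omega), if_pos hk]

lemma Wmat_apply (α : ℤ → ℂ) (z : ℂ) (s : ℕ) (i j : Fin s) :
    Wmat α z s i j = (if i = j then z else 0) - cmvEntry α (1 + (i : ℕ)) (1 + (j : ℕ)) := by
  simp [Wmat, Matrix.sub_apply, Matrix.smul_apply, Matrix.one_apply, cmvWindow,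
    mul_ite, mul_one, mul_zero, smul_eq_mul]

lemma Wmat_submatrix (α : ℤ → ℂ) (z : ℂ) (s : ℕ) :
    (Wmat α z (s + 1)).submatrix Fin.castSucc Fin.castSucc = Wmat α z s := by
  ext i j
  simp [Matrix.submatrix_apply, Wmat_apply, Fin.castSucc_inj]


section DetHelpers
variable {s : ℕ}

lemma det_col_single (M : Matrix (Fin (s+1)) (Fin (s+1)) ℂ) :
    (M.updateCol (Fin.last s) (fun i => if i = Fin.last s then 1 else 0)).det =
      (M.submatrix Fin.castSucc Fin.castSucc).det := by
  rw [Matrix.det_succ_column _ (Fin.last s)]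
  rw [Finset.sum_eq_single_of_mem (Fin.last s) (Finset.mem_univ _)]
  · have hsign : ((-1 : ℂ)) ^ ((Fin.last s : ℕ) + (Fin.last s : ℕ)) = 1 :=
      Even.neg_one_pow ⟨s, by simp⟩
    rw [hsign]
    have h1 : (M.updateCol (Fin.last s) (fun i => if i = Fin.last s then (1:ℂ) else 0)).submatrix
        ((Fin.last s).succAbove) ((Fin.last s).succAbove)
        = M.submatrix Fin.castSucc Fin.castSucc := by
      rw [Fin.succAbove_last]
      ext i j
      simp [Matrix.submatrix_apply, Matrix.updateCol_apply, (Fin.castSucc_lt_last j).ne]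
    rw [h1]
    simp [Matrix.updateCol_apply]
  · intro i _ hi
    simp [Matrix.updateCol_apply, hi]

lemma det_row_single (M : Matrix (Fin (s+1)) (Fin (s+1)) ℂ) :
    (M.updateRow (Fin.last s) (fun j => if j = Fin.last s then 1 else 0)).det =
      (M.submatrix Fin.castSucc Fin.castSucc).det := by
  rw [Matrix.det_succ_row _ (Fin.last s)]
  rw [Finset.sum_eq_single_of_mem (Fin.last s) (Finset.mem_univ _)]
  · have hsign : ((-1 : ℂ)) ^ ((Fin.last s : ℕ) + (Fin.last s : ℕ)) = 1 :=
      Even.neg_one_pow ⟨s, by simp⟩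
    rw [hsign]
    have h1 : (M.updateRow (Fin.last s) (fun j => if j = Fin.last s then (1:ℂ) else 0)).submatrix
        ((Fin.last s).succAbove) ((Fin.last s).succAbove)
        = M.submatrix Fin.castSucc Fin.castSucc := by
      rw [Fin.succAbove_last]
      ext i j
      simp [Matrix.submatrix_apply, Matrix.updateRow_apply, (Fin.castSucc_lt_last i).ne]
    rw [h1]
    simp [Matrix.updateRow_apply]
  · intro j _ hj
    simp [Matrix.updateRow_apply, hj]

end DetHelpers

lemma SL1 (α : ℤ → ℂ) (z : ℂ) (t : ℕ) :
    (Wmat α z (2*t+1)).det =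
      z * (Wmat α z (2*t)).det +
        conj (α ((2*t+1 : ℕ) : ℤ)) *
          ((Wmat α z (2*t+1)).updateCol (Fin.last (2*t)) (vecD α (2*t+1))).det := by
  have hcol : (fun i => Wmat α z (2*t+1) i (Fin.last (2*t)))
      = z • (fun i : Fin (2*t+1) => if i = Fin.last (2*t) then (1:ℂ) else 0)
        + conj (α ((2*t+1 : ℕ) : ℤ)) • vecD α (2*t+1) := by
    funext i
    simp only [Pi.add_apply, Pi.smul_apply, smul_eq_mul]
    rw [Wmat_apply]
    simp only [Fin.val_last]
    rcases eq_or_ne i (Fin.last (2*t)) with rfl | hi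
    · rw [if_pos rfl, if_pos rfl]
      simp only [Fin.val_last]
      rw [cmvEntry_diag]
      have hv : vecD α (2*t+1) (Fin.last (2*t)) = α ((2*t : ℕ) : ℤ) := by
        simp [vecD]
      rw [hv]
      have e1 : (1 : ℤ) + ((2*t : ℕ) : ℤ) - 1 = ((2*t : ℕ) : ℤ) := by ring
      rw [e1]
      have e2 : ((2*t+1 : ℕ) : ℤ) = 1 + ((2*t : ℕ) : ℤ) := by push_cast; ring
      rw [e2]
      ring
    · rw [if_neg hi, if_neg hi]
      have h1 : (i : ℕ) < 2*t := by
        have h2 := i.isLt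
        have h3 : (i : ℕ) ≠ 2*t := by
          intro hc; exact hi (Fin.ext (by simpa using hc))
        omega
      rcases eq_or_ne ((i:ℕ) + 2) (2*t+1) with h2 | h2
      · have hv : vecD α (2*t+1) i = -((rhoC α (((i:ℕ) : ℤ) + 1) : ℝ) : ℂ) := by
          simp only [vecD]
          rw [if_neg (by omega), if_pos h2]
        rw [hv]
        have hpar : ((1:ℤ) + ((i:ℕ) : ℤ)) % 2 = 0 := by omega
        rw [cmvEntry_even_one_above α hpar (by push_cast; omega)]
        have e3 : ((1:ℤ) + ((i:ℕ) : ℤ)) + 1 = ((2*t+1 : ℕ) : ℤ) := by push_cast; omega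
        have e4 : (1:ℤ) + ((i:ℕ) : ℤ) = ((i:ℕ) : ℤ) + 1 := by ring
        rw [e3, e4]
        ring
      · have hv : vecD α (2*t+1) i = 0 := by
          simp only [vecD]
          rw [if_neg (by omega), if_neg h2]
        rw [hv]
        rcases eq_or_ne ((i:ℕ) + 2) (2*t) with h3 | h3
        · rw [cmvEntry_zero α (Or.inr ⟨by omega, by omega⟩)]
          ring
        · rw [cmvEntry_far α (Or.inr (by push_cast; omega))]
          ring
  conv_lhs => rw [← (Wmat α z (2*t+1)).updateCol_eq_self (Fin.last (2*t)), hcol]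
  rw [Matrix.det_updateCol_add, Matrix.det_updateCol_smul, Matrix.det_updateCol_smul,
    det_col_single, Wmat_submatrix]
lemma SL2 (α : ℤ → ℂ) (z : ℂ) (t : ℕ) :
    (Wmat α z (2*t+2)).det =
      z * (Wmat α z (2*t+1)).det +
        conj (α ((2*t+2 : ℕ) : ℤ)) *
          ((Wmat α z (2*t+2)).updateRow (Fin.last (2*t+1)) (vecD α (2*t+2))).det := by
  have hrow : Wmat α z (2*t+2) (Fin.last (2*t+1))
      = z • (fun j : Fin (2*t+2) => if j = Fin.last (2*t+1) then (1:ℂ) else 0)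
        + conj (α ((2*t+2 : ℕ) : ℤ)) • vecD α (2*t+2) := by
    funext j
    simp only [Pi.add_apply, Pi.smul_apply, smul_eq_mul]
    rw [Wmat_apply]
    simp only [Fin.val_last]
    rcases eq_or_ne j (Fin.last (2*t+1)) with rfl | hj
    · rw [if_pos rfl, if_pos rfl]
      simp only [Fin.val_last]
      rw [cmvEntry_diag]
      have hv : vecD α (2*t+2) (Fin.last (2*t+1)) = α ((2*t+1 : ℕ) : ℤ) := by
        simp [vecD]
      rw [hv]
      have e1 : (1 : ℤ) + ((2*t+1 : ℕ) : ℤ) - 1 = ((2*t+1 : ℕ) : ℤ) := by ring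
      rw [e1]
      have e2 : ((2*t+2 : ℕ) : ℤ) = 1 + ((2*t+1 : ℕ) : ℤ) := by push_cast; ring
      rw [e2]
      ring
    · rw [if_neg (fun hc => hj hc.symm), if_neg hj]
      have h1 : (j : ℕ) < 2*t+1 := by
        have h2 := j.isLt
        have h3 : (j : ℕ) ≠ 2*t+1 := by
          intro hc; exact hj (Fin.ext (by simpa using hc))
        omega
      rcases eq_or_ne ((j:ℕ) + 2) (2*t+2) with h2 | h2
      · have hv : vecD α (2*t+2) j = -((rhoC α (((j:ℕ) : ℤ) + 1) : ℝ) : ℂ) := by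
          simp only [vecD]
          rw [if_neg (by omega), if_pos h2]
        rw [hv]
        have hpar : ((1:ℤ) + ((2*t+1 : ℕ) : ℤ)) % 2 = 0 := by omega
        rw [cmvEntry_even_one_below α hpar (by push_cast; omega)]
        have e3 : ((1:ℤ) + ((2*t+1 : ℕ) : ℤ)) = ((2*t+2 : ℕ) : ℤ) := by push_cast; omega
        have e4 : ((2*t+2 : ℕ) : ℤ) - 1 = ((j:ℕ) : ℤ) + 1 := by push_cast; omega
        rw [e3, e4]
        ring
      · have hv : vecD α (2*t+2) j = 0 := by
          simp only [vecD]
          rw [if_neg (by omega), if_neg h2]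
        rw [hv]
        rw [cmvEntry_zero α (Or.inl ⟨by omega, Or.inl (by push_cast; omega)⟩)]
        ring
  conv_lhs => rw [← (Wmat α z (2*t+2)).updateRow_eq_self (Fin.last (2*t+1)), hrow]
  rw [Matrix.det_updateRow_add, Matrix.det_updateRow_smul, Matrix.det_updateRow_smul,
    det_row_single, Wmat_submatrix]
lemma vecD_last (α : ℤ → ℂ) (s : ℕ) : vecD α (s+1) (Fin.last s) = α ((s : ℕ) : ℤ) := by
  simp [vecD]

lemma vecD_sub (α : ℤ → ℂ) {s : ℕ} (q : Fin s) (h : (q:ℕ) + 2 = s) :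
    vecD α s q = -((rhoC α (((q:ℕ) : ℤ) + 1) : ℝ) : ℂ) := by
  simp only [vecD]
  rw [if_neg (by omega), if_pos h]

lemma vecD_zero (α : ℤ → ℂ) {s : ℕ} (q : Fin s) (h : (q:ℕ) + 2 < s) :
    vecD α s q = 0 := by
  simp only [vecD]
  rw [if_neg (by omega), if_neg (by omega)]

lemma submatrix_updateRow_last {s : ℕ} (W : Matrix (Fin (s+1)) (Fin (s+1)) ℂ) (r : Fin (s+1) → ℂ) :
    (W.updateRow (Fin.last s) r).submatrix Fin.castSucc Fin.castSucc =
      W.submatrix Fin.castSucc Fin.castSucc := by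
  ext i j
  simp [Matrix.updateRow_apply, (Fin.castSucc_lt_last i).ne]

lemma submatrix_updateCol_last {s : ℕ} (W : Matrix (Fin (s+1)) (Fin (s+1)) ℂ) (c : Fin (s+1) → ℂ) :
    (W.updateCol (Fin.last s) c).submatrix Fin.castSucc Fin.castSucc =
      W.submatrix Fin.castSucc Fin.castSucc := by
  ext i j
  simp [Matrix.updateCol_apply, (Fin.castSucc_lt_last j).ne]

lemma Wmat_castSucc_apply (α : ℤ → ℂ) (z : ℂ) (s : ℕ) (i j : Fin s) :
    Wmat α z (s+1) (Fin.castSucc i) (Fin.castSucc j) = Wmat α z s i j := by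
  have := congrFun (congrFun (Wmat_submatrix α z s) i) j
  simpa [Matrix.submatrix_apply] using this

lemma SL3 (α : ℤ → ℂ) (z : ℂ) (t : ℕ) :
    ((Wmat α z (2*t+2)).updateRow (Fin.last (2*t+1)) (vecD α (2*t+2))).det =
      α ((2*t+1 : ℕ) : ℤ) * (Wmat α z (2*t+1)).det +
        ((rhoC α ((2*t+1 : ℕ) : ℤ) : ℝ) : ℂ) * ((rhoC α ((2*t+1 : ℕ) : ℤ) : ℝ) : ℂ) *
          ((Wmat α z (2*t+1)).updateCol (Fin.last (2*t)) (vecD α (2*t+1))).det := by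
  set M := (Wmat α z (2*t+2)).updateRow (Fin.last (2*t+1)) (vecD α (2*t+2)) with hM
  have hlast : M (Fin.last (2*t+1)) (Fin.last (2*t+1)) = α ((2*t+1 : ℕ) : ℤ) := by
    simp only [hM, Matrix.updateRow_self]
    exact vecD_last α (2*t+1)
  have hmid : M (Fin.last (2*t+1)) (Fin.castSucc (Fin.last (2*t)))
      = -((rhoC α ((2*t+1 : ℕ) : ℤ) : ℝ) : ℂ) := by
    simp only [hM, Matrix.updateRow_self]
    rw [vecD_sub α _ (by simp)]
    norm_num [show ((((Fin.castSucc (Fin.last (2*t)) : Fin (2*t+2)) : ℕ) : ℤ)) + 1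
      = ((2*t+1 : ℕ) : ℤ) by simp only [Fin.coe_castSucc, Fin.val_last]; push_cast; ring]
  have hminor1 : (M.submatrix Fin.castSucc Fin.castSucc).det = (Wmat α z (2*t+1)).det := by
    rw [hM, submatrix_updateRow_last, Wmat_submatrix]
  have hminor2 : M.submatrix Fin.castSucc ((Fin.castSucc (Fin.last (2*t))).succAbove)
      = (Wmat α z (2*t+1)).updateCol (Fin.last (2*t))
          (((rhoC α ((2*t+1 : ℕ) : ℤ) : ℝ) : ℂ) • vecD α (2*t+1)) := by
    ext i j
    have hMrow : ∀ c, M (Fin.castSucc i) c = Wmat α z (2*t+2) (Fin.castSucc i) c := by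
      intro c
      simp [hM, Matrix.updateRow_apply, (Fin.castSucc_lt_last i).ne]
    rcases eq_or_ne j (Fin.last (2*t)) with rfl | hj
    · have hcol : (Fin.castSucc (Fin.last (2*t))).succAbove (Fin.last (2*t)) = Fin.last (2*t+1) := by
        rw [Fin.succAbove_of_le_castSucc _ _ (le_refl _), Fin.succ_last]
      rw [Matrix.submatrix_apply, hcol, hMrow]
      rw [Matrix.updateCol_self, Pi.smul_apply, smul_eq_mul]
      rw [Wmat_apply]
      rw [if_neg (Fin.castSucc_lt_last i).ne]
      simp only [Fin.coe_castSucc, Fin.val_last]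
      rcases eq_or_ne ((i : ℕ)) (2*t) with h1 | h1
      · rw [cmvEntry_odd_one_above α (by omega) (by push_cast; omega)]
        have hv : vecD α (2*t+1) i = α (((i:ℕ) : ℤ)) := by
          simp only [vecD]
          rw [if_pos (by omega)]
        rw [hv]
        have e1 : (1 : ℤ) + ((i:ℕ) : ℤ) - 1 = ((i:ℕ) : ℤ) := by ring
        have e2 : (1 : ℤ) + ((i:ℕ) : ℤ) = ((2*t+1 : ℕ) : ℤ) := by push_cast; omega
        rw [e1, e2]
        ring
      · rcases eq_or_ne ((i : ℕ) + 2) (2*t+1) with h2 | h2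
        · rw [cmvEntry_even_two_above α (by omega) (by push_cast; omega)]
          rw [vecD_sub α i (by omega)]
          have e1 : (1 : ℤ) + ((i:ℕ) : ℤ) + 1 = ((2*t+1 : ℕ) : ℤ) := by push_cast; omega
          have e2 : (1 : ℤ) + ((i:ℕ) : ℤ) = ((i:ℕ) : ℤ) + 1 := by ring
          rw [e1, e2]
          ring
        · have hi2 : (i : ℕ) + 2 < 2*t + 1 := by
            have := i.isLt; omega
          rw [cmvEntry_far α (Or.inr (by push_cast; omega))]
          rw [vecD_zero α i hi2]
          ring
    · have hjlt : (j : ℕ) < 2*t := by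
        have h4 := j.isLt
        have h5 : (j : ℕ) ≠ 2*t := fun hc => hj (Fin.ext (by simpa using hc))
        omega
      have hcol : (Fin.castSucc (Fin.last (2*t))).succAbove j = Fin.castSucc j := by
        apply Fin.succAbove_of_castSucc_lt
        rw [Fin.castSucc_lt_castSucc_iff]
        exact lt_of_le_of_ne (Fin.le_last j) hj
      rw [Matrix.submatrix_apply, hcol, hMrow, Wmat_castSucc_apply]
      rw [Matrix.updateCol_apply, if_neg hj]
  rw [Matrix.det_succ_row M (Fin.last (2*t+1))]
  rw [Fin.sum_univ_castSucc, Fin.sum_univ_castSucc]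
  have hzero : ∀ j : Fin (2*t),
      ((-1:ℂ)) ^ ((Fin.last (2*t+1) : ℕ) + ((Fin.castSucc (Fin.castSucc j) : Fin (2*t+2)) : ℕ))
        * M (Fin.last (2*t+1)) (Fin.castSucc (Fin.castSucc j))
        * (M.submatrix (Fin.last (2*t+1)).succAbove
            (Fin.castSucc (Fin.castSucc j)).succAbove).det = 0 := by
    intro j
    have hv : M (Fin.last (2*t+1)) (Fin.castSucc (Fin.castSucc j)) = 0 := by
      simp only [hM, Matrix.updateRow_self]
      have hval : ((Fin.castSucc (Fin.castSucc j) : Fin (2*t+2)) : ℕ) + 2 < 2*t+2 := by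
        simp only [Fin.coe_castSucc]
        have := j.isLt
        omega
      exact vecD_zero α _ hval
    rw [hv]
    ring
  rw [Finset.sum_eq_zero (fun j _ => hzero j), zero_add]
  simp only [Fin.succAbove_last]
  rw [hlast, hmid, hminor1, hminor2, Matrix.det_updateCol_smul]
  have hs1 : ((-1:ℂ)) ^ ((Fin.last (2*t+1) : ℕ) + (Fin.last (2*t+1) : ℕ)) = 1 :=
    Even.neg_one_pow ⟨2*t+1, by simp [Fin.val_last]⟩
  have hs2 : ((-1:ℂ)) ^ ((Fin.last (2*t+1) : ℕ) + ((Fin.castSucc (Fin.last (2*t)) : Fin (2*t+2)) : ℕ)) = -1 :=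
    Odd.neg_one_pow ⟨2*t, by simp [Fin.val_last, Fin.coe_castSucc]; ring⟩
  rw [hs1, hs2]
  ring
lemma SL4 (α : ℤ → ℂ) (z : ℂ) (t : ℕ) :
    ((Wmat α z (2*t+3)).updateCol (Fin.last (2*t+2)) (vecD α (2*t+3))).det =
      α ((2*t+2 : ℕ) : ℤ) * (Wmat α z (2*t+2)).det +
        ((rhoC α ((2*t+2 : ℕ) : ℤ) : ℝ) : ℂ) * ((rhoC α ((2*t+2 : ℕ) : ℤ) : ℝ) : ℂ) *
          ((Wmat α z (2*t+2)).updateRow (Fin.last (2*t+1)) (vecD α (2*t+2))).det := by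
  set M := (Wmat α z (2*t+3)).updateCol (Fin.last (2*t+2)) (vecD α (2*t+3)) with hM
  have hlast : M (Fin.last (2*t+2)) (Fin.last (2*t+2)) = α ((2*t+2 : ℕ) : ℤ) := by
    simp only [hM, Matrix.updateCol_self]
    exact vecD_last α (2*t+2)
  have hmid : M (Fin.castSucc (Fin.last (2*t+1))) (Fin.last (2*t+2))
      = -((rhoC α ((2*t+2 : ℕ) : ℤ) : ℝ) : ℂ) := by
    simp only [hM, Matrix.updateCol_self]
    rw [vecD_sub α _ (by simp)]
    have e : ((((Fin.castSucc (Fin.last (2*t+1)) : Fin (2*t+3)) : ℕ) : ℤ)) + 1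
        = ((2*t+2 : ℕ) : ℤ) := by
      simp only [Fin.coe_castSucc, Fin.val_last]; push_cast; ring
    rw [e]
  have hminor1 : (M.submatrix Fin.castSucc Fin.castSucc).det = (Wmat α z (2*t+2)).det := by
    rw [hM, submatrix_updateCol_last, Wmat_submatrix]
  have hminor2 : M.submatrix ((Fin.castSucc (Fin.last (2*t+1))).succAbove) Fin.castSucc
      = (Wmat α z (2*t+2)).updateRow (Fin.last (2*t+1))
          (((rhoC α ((2*t+2 : ℕ) : ℤ) : ℝ) : ℂ) • vecD α (2*t+2)) := by
    ext i j
    have hMcol : ∀ r, M r (Fin.castSucc j) = Wmat α z (2*t+3) r (Fin.castSucc j) := by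
      intro r
      simp [hM, Matrix.updateCol_apply, (Fin.castSucc_lt_last j).ne]
    rcases eq_or_ne i (Fin.last (2*t+1)) with rfl | hi
    · have hrw : (Fin.castSucc (Fin.last (2*t+1))).succAbove (Fin.last (2*t+1)) = Fin.last (2*t+2) := by
        rw [Fin.succAbove_of_le_castSucc _ _ (le_refl _), Fin.succ_last]
      rw [Matrix.submatrix_apply, hrw, hMcol]
      rw [Matrix.updateRow_self, Pi.smul_apply, smul_eq_mul]
      rw [Wmat_apply]
      rw [if_neg (Fin.castSucc_lt_last j).ne']
      simp only [Fin.coe_castSucc, Fin.val_last]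
      rcases eq_or_ne ((j : ℕ)) (2*t+1) with h1 | h1
      · rw [cmvEntry_odd_one_below α (by omega) (by push_cast; omega)]
        have hv : vecD α (2*t+2) j = α (((j:ℕ) : ℤ)) := by
          simp only [vecD]
          rw [if_pos (by omega)]
        rw [hv]
        have e1 : (1 : ℤ) + ((2*t+2 : ℕ) : ℤ) - 1 = ((2*t+2 : ℕ) : ℤ) := by ring
        have e2 : (1 : ℤ) + ((2*t+2 : ℕ) : ℤ) - 2 = ((j:ℕ) : ℤ) := by push_cast; omega
        rw [e1, e2]
        ring
      · rcases eq_or_ne ((j : ℕ) + 2) (2*t+2) with h2 | h2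
        · rw [cmvEntry_odd_two_below α (by omega) (by push_cast; omega)]
          rw [vecD_sub α j (by omega)]
          have e1 : (1 : ℤ) + ((2*t+2 : ℕ) : ℤ) - 1 = ((2*t+2 : ℕ) : ℤ) := by ring
          have e2 : (1 : ℤ) + ((2*t+2 : ℕ) : ℤ) - 2 = ((j:ℕ) : ℤ) + 1 := by push_cast; omega
          rw [e1, e2]
          ring
        · have hj2 : (j : ℕ) + 2 < 2*t + 2 := by
            have := j.isLt; omega
          rw [cmvEntry_far α (Or.inl (by push_cast; omega))]
          rw [vecD_zero α j hj2]
          ring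
    · have hilt : (i : ℕ) < 2*t+1 := by
        have h4 := i.isLt
        have h5 : (i : ℕ) ≠ 2*t+1 := fun hc => hi (Fin.ext (by simpa using hc))
        omega
      have hrw : (Fin.castSucc (Fin.last (2*t+1))).succAbove i = Fin.castSucc i := by
        apply Fin.succAbove_of_castSucc_lt
        rw [Fin.castSucc_lt_castSucc_iff]
        exact lt_of_le_of_ne (Fin.le_last i) hi
      rw [Matrix.submatrix_apply, hrw, hMcol, Wmat_castSucc_apply]
      rw [Matrix.updateRow_apply, if_neg hi]
  rw [Matrix.det_succ_column M (Fin.last (2*t+2))]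
  rw [Fin.sum_univ_castSucc, Fin.sum_univ_castSucc]
  have hzero : ∀ i : Fin (2*t+1),
      ((-1:ℂ)) ^ (((Fin.castSucc (Fin.castSucc i) : Fin (2*t+3)) : ℕ) + ((Fin.last (2*t+2)) : ℕ))
        * M (Fin.castSucc (Fin.castSucc i)) (Fin.last (2*t+2))
        * (M.submatrix (Fin.castSucc (Fin.castSucc i)).succAbove
            (Fin.last (2*t+2)).succAbove).det = 0 := by
    intro i
    have hv : M (Fin.castSucc (Fin.castSucc i)) (Fin.last (2*t+2)) = 0 := by
      simp only [hM, Matrix.updateCol_self]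
      have hval : ((Fin.castSucc (Fin.castSucc i) : Fin (2*t+3)) : ℕ) + 2 < 2*t+3 := by
        simp only [Fin.coe_castSucc]
        have := i.isLt
        omega
      exact vecD_zero α _ hval
    rw [hv]
    ring
  rw [Finset.sum_eq_zero (fun i _ => hzero i), zero_add]
  simp only [Fin.succAbove_last]
  rw [hlast, hmid, hminor1, hminor2, Matrix.det_updateRow_smul]
  have hs1 : ((-1:ℂ)) ^ ((Fin.last (2*t+2) : ℕ) + (Fin.last (2*t+2) : ℕ)) = 1 :=
    Even.neg_one_pow ⟨2*t+2, by simp [Fin.val_last]⟩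
  have hs2 : ((-1:ℂ)) ^ (((Fin.castSucc (Fin.last (2*t+1)) : Fin (2*t+3)) : ℕ) + ((Fin.last (2*t+2)) : ℕ)) = -1 :=
    Odd.neg_one_pow ⟨2*t+1, by simp [Fin.val_last, Fin.coe_castSucc]; ring⟩
  rw [hs1, hs2]
  ring
def szA (α : ℤ → ℂ) (z : ℂ) : ℕ → ℂ × ℂ
  | 0 => (1, α 0)
  | s + 1 =>
      (z * (szA α z s).1 + conj (α ((s+1 : ℕ) : ℤ)) * (szA α z s).2,
       (szA α z s).2 + α ((s+1 : ℕ) : ℤ) * z * (szA α z s).1)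

lemma szA_succ1 (α : ℤ → ℂ) (z : ℂ) (s : ℕ) :
    (szA α z (s+1)).1 = z * (szA α z s).1 + conj (α ((s+1 : ℕ) : ℤ)) * (szA α z s).2 := rfl

lemma szA_succ2 (α : ℤ → ℂ) (z : ℂ) (s : ℕ) :
    (szA α z (s+1)).2 = (szA α z s).2 + α ((s+1 : ℕ) : ℤ) * z * (szA α z s).1 := rfl

lemma rho_sq (α : ℤ → ℂ) (hα : ∀ k, ‖α k‖ < 1) (k : ℤ) :
    ((rhoC α k : ℝ) : ℂ) * ((rhoC α k : ℝ) : ℂ) = 1 - conj (α k) * α k := by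
  have h0 : (0:ℝ) ≤ 1 - ‖α k‖ ^ 2 := by
    have h1 := hα k
    nlinarith [norm_nonneg (α k)]
  have h1 : (rhoC α k : ℝ) * (rhoC α k : ℝ) = 1 - ‖α k‖ ^ 2 :=
    Real.mul_self_sqrt h0
  have h2 : ((rhoC α k : ℝ) : ℂ) * ((rhoC α k : ℝ) : ℂ)
      = (((1 - ‖α k‖ ^ 2 : ℝ)) : ℂ) := by
    rw [← h1]; push_cast; ring
  rw [h2]
  rw [show (((1 - ‖α k‖ ^ 2 : ℝ)) : ℂ)
      = 1 - (((‖α k‖ ^ 2 : ℝ)) : ℂ) by push_cast; ring]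
  rw [show (((‖α k‖ ^ 2 : ℝ)) : ℂ) = conj (α k) * α k by
    rw [Complex.sq_norm, ← Complex.mul_conj]; push_cast; ring]

lemma colD1 (α : ℤ → ℂ) (z : ℂ) :
    ((Wmat α z 1).updateCol (Fin.last 0) (vecD α 1)).det = α 0 := by
  rw [Matrix.det_fin_one]
  have h : (0 : Fin 1) = Fin.last 0 := Subsingleton.elim _ _
  rw [h, Matrix.updateCol_self]
  simpa using vecD_last α 0

lemma mainDet (α : ℤ → ℂ) (hα : ∀ k, ‖α k‖ < 1) (z : ℂ) : ∀ t : ℕ,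
    (Wmat α z (2*t)).det = (szA α z (2*t)).1 ∧
    (Wmat α z (2*t+1)).det = (szA α z (2*t+1)).1 ∧
    ((Wmat α z (2*t+1)).updateCol (Fin.last (2*t)) (vecD α (2*t+1))).det = (szA α z (2*t)).2 ∧
    ((Wmat α z (2*t+2)).updateRow (Fin.last (2*t+1)) (vecD α (2*t+2))).det = (szA α z (2*t+1)).2 := by
  intro t
  induction t with
  | zero =>
      have h0 : (Wmat α z 0).det = 1 := Matrix.det_fin_zero
      have hc : ((Wmat α z 1).updateCol (Fin.last 0) (vecD α 1)).det = (szA α z 0).2 :=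
        colD1 α z
      have h1 : (Wmat α z 1).det = (szA α z 1).1 := by
        have hS := SL1 α z 0
        norm_num at hS
        rw [hS, h0, colD1]
        rw [szA_succ1]
        norm_num [szA]
      refine ⟨h0, h1, hc, ?_⟩
      have hS := SL3 α z 0
      norm_num at hS
      rw [hS, h1, colD1]
      rw [szA_succ2]
      have hrr := rho_sq α hα ((1:ℕ) : ℤ)
      norm_num at hrr ⊢
      rw [hrr, szA_succ1]
      norm_num [szA]
      ring
  | succ t ih =>
      obtain ⟨ih0, ih1, ihc, ihr⟩ := ih
      have hx1 : (szA α z (2*t+2)).1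
          = z * (szA α z (2*t+1)).1 + conj (α ((2*t+2 : ℕ) : ℤ)) * (szA α z (2*t+1)).2 :=
        szA_succ1 α z (2*t+1)
      have hx2 : (szA α z (2*t+2)).2
          = (szA α z (2*t+1)).2 + α ((2*t+2 : ℕ) : ℤ) * z * (szA α z (2*t+1)).1 :=
        szA_succ2 α z (2*t+1)
      have hy1 : (szA α z (2*t+3)).1
          = z * (szA α z (2*t+2)).1 + conj (α ((2*t+3 : ℕ) : ℤ)) * (szA α z (2*t+2)).2 :=
        szA_succ1 α z (2*t+2)
      have hy2 : (szA α z (2*t+3)).2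
          = (szA α z (2*t+2)).2 + α ((2*t+3 : ℕ) : ℤ) * z * (szA α z (2*t+2)).1 :=
        szA_succ2 α z (2*t+2)
      have ha2 : (Wmat α z (2*t+2)).det = (szA α z (2*t+2)).1 := by
        rw [SL2 α z t, ih1, ihr, hx1]
      have hb : ((Wmat α z (2*t+3)).updateCol (Fin.last (2*t+2)) (vecD α (2*t+3))).det
          = (szA α z (2*t+2)).2 := by
        rw [SL4 α z t, ha2, ihr, rho_sq α hα ((2*t+2 : ℕ) : ℤ), hx2, hx1]
        ring
      have hc2 : (Wmat α z (2*t+3)).det = (szA α z (2*t+3)).1 := by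
        have hS : (Wmat α z (2*t+3)).det
            = z * (Wmat α z (2*t+2)).det + conj (α ((2*t+3 : ℕ) : ℤ)) *
                ((Wmat α z (2*t+3)).updateCol (Fin.last (2*t+2)) (vecD α (2*t+3))).det :=
          SL1 α z (t+1)
        rw [hS, ha2, hb]
        exact hy1.symm
      have hd : ((Wmat α z (2*t+4)).updateRow (Fin.last (2*t+3)) (vecD α (2*t+4))).det
          = (szA α z (2*t+3)).2 := by
        have hS : ((Wmat α z (2*t+4)).updateRow (Fin.last (2*t+3)) (vecD α (2*t+4))).det
            = α ((2*t+3 : ℕ) : ℤ) * (Wmat α z (2*t+3)).det +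
                ((rhoC α ((2*t+3 : ℕ) : ℤ) : ℝ) : ℂ) * ((rhoC α ((2*t+3 : ℕ) : ℤ) : ℝ) : ℂ) *
                  ((Wmat α z (2*t+3)).updateCol (Fin.last (2*t+2)) (vecD α (2*t+3))).det :=
          SL3 α z (t+1)
        rw [hS, hc2, hb, rho_sq α hα ((2*t+3 : ℕ) : ℤ), hy2, hy1]
        ring
      exact ⟨ha2, hc2, hb, hd⟩
lemma windowDet_eq (α : ℤ → ℂ) (z : ℂ) (s : ℕ) :
    windowDet α z 1 s = (Wmat α z s).det := by
  have h := RingHom.map_det (Polynomial.evalRingHom z)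
    ((Polynomial.X : Polynomial ℂ) • (1 : Matrix (Fin s) (Fin s) (Polynomial ℂ)) -
      (cmvWindow α 1 s).map Polynomial.C)
  simp only [Polynomial.coe_evalRingHom] at h
  unfold windowDet windowPoly
  rw [h]
  congr 1
  ext i j
  simp [Matrix.map_apply, Matrix.sub_apply, Matrix.smul_apply, Matrix.one_apply, Wmat,
    cmvWindow, smul_eq_mul, apply_ite, Matrix.of_apply]

lemma detPart (α : ℤ → ℂ) (hα : ∀ k, ‖α k‖ < 1) (z : ℂ) (m : ℕ) :
    windowDet α z 1 m = (szA α z m).1 := by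
  rw [windowDet_eq]
  rcases Nat.even_or_odd m with ⟨t, ht⟩ | ⟨t, ht⟩
  · have hm : m = 2*t := by omega
    subst hm
    exact (mainDet α hα z t).1
  · have hm : m = 2*t+1 := by omega
    subst hm
    exact (mainDet α hα z t).2.1

lemma monicOPUC_succ (β : ℕ → ℂ) (n : ℕ) :
    monicOPUC β (n+1) = Polynomial.X * monicOPUC β n -
      Polynomial.C (conj (β n)) * revPoly n (monicOPUC β n) := rfl

lemma revPoly_coeff (n : ℕ) (Q : Polynomial ℂ) (k : ℕ) :
    (revPoly n Q).coeff k = if k ≤ n then conj (Q.coeff (n - k)) else 0 := by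
  unfold revPoly
  rw [Polynomial.finset_sum_coeff]
  simp only [Polynomial.coeff_C_mul, Polynomial.coeff_X_pow, mul_ite, mul_one, mul_zero]
  rw [Finset.sum_ite_eq (Finset.range (n+1)) k (fun j => conj (Q.coeff (n - j)))]
  simp [Finset.mem_range, Nat.lt_succ_iff]

lemma monicOPUC_coeff_zero (β : ℕ → ℂ) : ∀ n k, n < k → (monicOPUC β n).coeff k = 0
  | 0, k, h => by
      rw [show monicOPUC β 0 = 1 from rfl, Polynomial.coeff_one, if_neg (by omega)]
  | (n+1), k, h => by
      rw [monicOPUC_succ, Polynomial.coeff_sub, Polynomial.coeff_C_mul, revPoly_coeff]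
      obtain ⟨j, rfl⟩ : ∃ j, k = j + 1 := ⟨k - 1, by omega⟩
      rw [Polynomial.coeff_X_mul]
      rw [monicOPUC_coeff_zero β n j (by omega), if_neg (by omega)]
      ring

lemma revPoly_monicOPUC_succ (β : ℕ → ℂ) (n : ℕ) :
    revPoly (n+1) (monicOPUC β (n+1))
      = revPoly n (monicOPUC β n) - Polynomial.C (β n) * (Polynomial.X * monicOPUC β n) := by
  set Q := monicOPUC β n with hQdef
  ext k
  rw [Polynomial.coeff_sub, Polynomial.coeff_C_mul, revPoly_coeff, revPoly_coeff]
  have hXQ : ∀ j : ℕ, (Polynomial.X * Q).coeff j = if j = 0 then 0 else Q.coeff (j - 1) := by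
    intro j
    rcases j with _ | i
    · rw [mul_comm, Polynomial.coeff_mul_X_zero]
      simp
    · rw [Polynomial.coeff_X_mul]
      simp
  have hQ' : ∀ j : ℕ, (monicOPUC β (n+1)).coeff j
      = (if j = 0 then 0 else Q.coeff (j-1))
        - conj (β n) * (if j ≤ n then conj (Q.coeff (n - j)) else 0) := by
    intro j
    rw [monicOPUC_succ, Polynomial.coeff_sub, Polynomial.coeff_C_mul, revPoly_coeff, hXQ]
  rw [hXQ]
  by_cases hk : k ≤ n + 1
  · rw [if_pos hk, hQ']
    by_cases hk0 : k = 0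
    · subst hk0
      rw [if_neg (by omega), if_neg (by omega), if_pos (by omega), if_pos rfl]
      have e : n + 1 - 0 - 1 = n - 0 := by omega
      rw [e]
      simp
    · by_cases hkn : k ≤ n
      · rw [if_neg (by omega), if_pos (by omega), if_pos hkn, if_neg hk0]
        have e1 : n + 1 - k - 1 = n - k := by omega
        have e2 : n - (n + 1 - k) = k - 1 := by omega
        rw [e1, e2]
        simp only [map_sub, _root_.map_mul, Complex.conj_conj]
      · have ek : k = n + 1 := by omega
        subst ek
        have e : n + 1 - (n + 1) = 0 := by omega
        rw [e]
        rw [if_pos rfl, if_pos (by omega), if_neg (by omega), if_neg (by omega)]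
        have e2 : n - 0 = n := by omega
        have e3 : n + 1 - 1 = n := by omega
        rw [e2, e3]
        simp only [map_sub, _root_.map_mul, Complex.conj_conj, zero_sub, map_neg, map_zero]
  · rw [if_neg hk, if_neg (by omega), if_neg (by omega)]
    rw [monicOPUC_coeff_zero β n (k-1) (by omega)]
    ring
lemma mainAlg (α : ℤ → ℂ) (z : ℂ) : ∀ m : ℕ,
    (monicOPUC (fun k : ℕ => α k) (m+1)).eval z +
      (monicOPUC (fun k : ℕ => -α k) (m+1)).eval z = 2 * z * (szA α z m).1 ∧
    (revPoly (m+1) (monicOPUC (fun k : ℕ => α k) (m+1))).eval z -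
      (revPoly (m+1) (monicOPUC (fun k : ℕ => -α k) (m+1))).eval z
      = -(2 * z * (szA α z m).2) := by
  intro m
  induction m with
  | zero =>
      have h0 : ∀ β : ℕ → ℂ, monicOPUC β 1 = Polynomial.X - Polynomial.C (conj (β 0)) := by
        intro β
        rw [monicOPUC_succ]
        simp [monicOPUC, revPoly]
      have h1 : ∀ β : ℕ → ℂ, revPoly 1 (monicOPUC β 1)
          = 1 - Polynomial.C (β 0) * Polynomial.X := by
        intro β
        rw [revPoly_monicOPUC_succ]
        simp [monicOPUC, revPoly]
      constructor
      · rw [h0, h0]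
        simp [szA, map_neg]
        ring
      · rw [h1, h1]
        simp [szA, map_neg]
        ring
  | succ m ih =>
      obtain ⟨ih1, ih2⟩ := ih
      have hA : ∀ β : ℕ → ℂ, (monicOPUC β (m+2)).eval z
          = z * (monicOPUC β (m+1)).eval z
            - conj (β (m+1)) * (revPoly (m+1) (monicOPUC β (m+1))).eval z := by
        intro β
        rw [monicOPUC_succ]
        simp
      have hB : ∀ β : ℕ → ℂ, (revPoly (m+2) (monicOPUC β (m+2))).eval z
          = (revPoly (m+1) (monicOPUC β (m+1))).eval z
            - β (m+1) * (z * (monicOPUC β (m+1)).eval z) := by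
        intro β
        rw [revPoly_monicOPUC_succ]
        simp
      have hs1 : (szA α z (m+1)).1
          = z * (szA α z m).1 + conj (α ((m+1 : ℕ) : ℤ)) * (szA α z m).2 := szA_succ1 α z m
      have hs2 : (szA α z (m+1)).2
          = (szA α z m).2 + α ((m+1 : ℕ) : ℤ) * z * (szA α z m).1 := szA_succ2 α z m
      constructor
      · rw [hA, hA, hs1]
        simp only [map_neg]
        linear_combination z * ih1 - conj (α ((m+1 : ℕ) : ℤ)) * ih2
      · rw [hB, hB, hs2]
        linear_combination ih2 - α ((m+1 : ℕ) : ℤ) * z * ih1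

end PhiAddPsi

open PhiAddPsi

theorem phi_add_psi (α : ℤ → ℂ) (hα : ∀ k, ‖α k‖ < 1)
    (n : ℕ) (hn : 1 ≤ n) (z : ℂ) :
    (monicOPUC (fun k : ℕ => α k) n).eval z +
      (monicOPUC (fun k : ℕ => -α k) n).eval z =
      2 * z * windowDet α z 1 (n - 1) := by
  obtain ⟨m, rfl⟩ : ∃ m, n = m + 1 := ⟨n - 1, by omega⟩
  simp only [Nat.add_sub_cancel]
  rw [detPart α hα z m]
  exact (mainAlg α z m).1
end
end

section
/- The following two expressions are equal: det(z - C_{[0,n-1]}) - z·det(z - E_{[1,n-1]}) and (z·det(z - E_{[1,n-1]}) - det(z - E_{[0,n-1]}))/α_{-1}, whenever α_{-1} ≠ 0; equivalently, z·det(z - E_{[1,n-1]}) - det(z - E_{[0,n-1]}) = α_{-1}·(det(z - C_{[0,n-1]}) - z·det(z - E_{[1,n-1]})). -/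
open Polynomial Matrix Complex
open scoped ComplexConjugate

noncomputable section

lemma rhoC_congr {α α' : ℤ → ℂ} (h : ∀ k : ℤ, 0 ≤ k → α' k = α k) {k : ℤ} (hk : 0 ≤ k) :
    rhoC α' k = rhoC α k := by unfold rhoC; rw [h k hk]

lemma cmvEntry_congr {α α' : ℤ → ℂ} (h : ∀ k : ℤ, 0 ≤ k → α' k = α k)
    {i j : ℤ} (hi : 0 ≤ i) (hj : 0 ≤ j) (hij : ¬(j = 0 ∧ i ≤ 1)) :
    cmvEntry α' i j = cmvEntry α i j := by
  unfold cmvEntry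
  by_cases hp : i % 2 = 0
  · rw [if_pos hp, if_pos hp]
    split_ifs with h1 h2 h3 h4
    · rw [h i hi, rhoC_congr h (by omega)]
    · rw [h i hi, h (i-1) (by omega)]
    · rw [h (i+1) (by omega), rhoC_congr h hi]
    · rw [rhoC_congr h (by omega), rhoC_congr h hi]
    · rfl
  · rw [if_neg hp, if_neg hp]
    split_ifs with h1 h2 h3 h4
    · rw [rhoC_congr h (by omega), rhoC_congr h (by omega)]
    · rw [rhoC_congr h (by omega), h (i-2) (by omega)]
    · rw [h i hi, h (i-1) (by omega)]
    · rw [h (i-1) (by omega), rhoC_congr h (by omega)]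
    · rfl

lemma cmvEntry_zero_zero (γ : ℤ → ℂ) : cmvEntry γ 0 0 = -conj (γ 0) * γ (-1) := by
  norm_num [cmvEntry]

lemma cmvEntry_one_zero (γ : ℤ → ℂ) : cmvEntry γ 1 0 = -((rhoC γ 0 : ℝ) : ℂ) * γ (-1) := by
  norm_num [cmvEntry]

lemma cmvEntry_big (γ : ℤ → ℂ) {i : ℤ} (hi : 2 ≤ i) : cmvEntry γ i 0 = 0 := by
  unfold cmvEntry
  split_ifs <;> first | rfl | (exfalso; omega)

lemma windowDet_eq_det (γ : ℤ → ℂ) (z : ℂ) (a : ℤ) (m : ℕ) :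
    windowDet γ z a m = (z • (1 : Matrix (Fin m) (Fin m) ℂ) - cmvWindow γ a m).det := by
  unfold windowDet windowPoly
  rw [← Polynomial.coe_evalRingHom, RingHom.map_det]
  congr 1
  ext i j
  simp only [Matrix.map_apply, Matrix.sub_apply, Matrix.smul_apply, Matrix.one_apply,
    coe_evalRingHom, eval_sub, smul_eq_mul, eval_mul, eval_X, eval_C]
  split_ifs with h
  · subst h; simp
  · simp [Matrix.one_apply_ne h]

lemma submatrix_succ_succ (α : ℤ → ℂ) (z : ℂ) (m : ℕ) :
    (z • (1 : Matrix (Fin (m+1)) (Fin (m+1)) ℂ) - cmvWindow α 0 (m+1)).submatrix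
        Fin.succ Fin.succ
      = z • (1 : Matrix (Fin m) (Fin m) ℂ) - cmvWindow α 1 m := by
  ext i j
  have hi : ((0 : ℤ) + ((i.succ : Fin (m+1)) : ℕ)) = 1 + (i : ℕ) := by
    simp [Fin.val_succ]; ring
  have hj : ((0 : ℤ) + ((j.succ : Fin (m+1)) : ℕ)) = 1 + (j : ℕ) := by
    simp [Fin.val_succ]; ring
  simp only [Matrix.submatrix_apply, Matrix.sub_apply, Matrix.smul_apply, Matrix.one_apply,
    cmvWindow, Matrix.of_apply, Fin.succ_inj, hi, hj]

def eZero (m : ℕ) : Fin (m+1) → ℂ := fun i => if i = 0 then 1 else 0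

def vCol (α : ℤ → ℂ) (m : ℕ) : Fin (m+1) → ℂ := fun i =>
  if (i : ℕ) = 0 then conj (α 0) else if (i : ℕ) = 1 then ((rhoC α 0 : ℝ) : ℂ) else 0

lemma key_decomp (α γ : ℤ → ℂ) (h : ∀ k : ℤ, 0 ≤ k → γ k = α k) (z : ℂ) (m : ℕ) :
    z • (1 : Matrix (Fin (m+1)) (Fin (m+1)) ℂ) - cmvWindow γ 0 (m+1)
      = Matrix.updateCol
          (z • (1 : Matrix (Fin (m+1)) (Fin (m+1)) ℂ) - cmvWindow α 0 (m+1)) 0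
          (z • eZero m + γ (-1) • vCol α m) := by
  ext i j
  rw [Matrix.updateCol_apply]
  by_cases hj : j = 0
  · subst hj
    rw [if_pos rfl]
    simp only [Matrix.sub_apply, Matrix.smul_apply, cmvWindow, Matrix.of_apply,
      Pi.add_apply, Pi.smul_apply, smul_eq_mul, eZero, vCol, Fin.val_zero,
      Nat.cast_zero, add_zero, zero_add]
    by_cases hi0 : i = 0
    · subst hi0
      simp only [Fin.val_zero, Nat.cast_zero, Matrix.one_apply_eq, cmvEntry_zero_zero,
        if_pos rfl]
      rw [h 0 le_rfl]
      norm_num [mul_comm]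
    · have hv0 : (i : ℕ) ≠ 0 := fun hh => hi0 (Fin.ext hh)
      rw [Matrix.one_apply_ne hi0, if_neg hv0]
      by_cases hi1 : (i : ℕ) = 1
      · have : ((i : ℕ) : ℤ) = 1 := by omega
        rw [this, if_pos hi1, cmvEntry_one_zero, rhoC_congr h le_rfl, if_neg hi0]
        ring
      · have h2 : (2 : ℤ) ≤ ((i : ℕ) : ℤ) := by omega
        rw [if_neg hi1, cmvEntry_big γ h2, if_neg hi0]
        ring
  · rw [if_neg hj]
    simp only [Matrix.sub_apply, Matrix.smul_apply, cmvWindow, Matrix.of_apply]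
    congr 1
    apply cmvEntry_congr h (by omega) (by omega)
    rintro ⟨hj0, -⟩
    have : (j : ℕ) = 0 := by omega
    exact hj (Fin.ext (by simp [this]))

theorem half_line_extended_determinant_relation (α : ℤ → ℂ)
    (hα : ∀ k, ‖α k‖ < 1) (n : ℕ) (hn : 1 ≤ n) (z : ℂ)
    (h0 : α (-1) ≠ 0) :
    windowDet (halfAlpha fun k : ℕ => α k) z 0 n - z * windowDet α z 1 (n - 1) =
        (z * windowDet α z 1 (n - 1) - windowDet α z 0 n) / α (-1) ∧
      z * windowDet α z 1 (n - 1) - windowDet α z 0 n =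
        α (-1) *
          (windowDet (halfAlpha fun k : ℕ => α k) z 0 n -
            z * windowDet α z 1 (n - 1)) := by
  obtain ⟨m, rfl⟩ : ∃ m, n = m + 1 := ⟨n - 1, by omega⟩
  simp only [Nat.add_sub_cancel]
  set B := z • (1 : Matrix (Fin (m+1)) (Fin (m+1)) ℂ) - cmvWindow α 0 (m+1) with hB
  have hdet : ∀ γ : ℤ → ℂ, (∀ k : ℤ, 0 ≤ k → γ k = α k) →
      windowDet γ z 0 (m+1) =
        z * (Matrix.updateCol B 0 (eZero m)).det +
          γ (-1) * (Matrix.updateCol B 0 (vCol α m)).det := by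
    intro γ hγ
    rw [windowDet_eq_det, key_decomp α γ hγ, Matrix.det_updateCol_add,
      Matrix.det_updateCol_smul, Matrix.det_updateCol_smul]
  have hW : (Matrix.updateCol B 0 (eZero m)).det = windowDet α z 1 m := by
    rw [Matrix.det_succ_column_zero]
    rw [Fintype.sum_eq_single (0 : Fin (m+1))]
    · have hsub : (Matrix.updateCol B 0 (eZero m)).submatrix
          (Fin.succAbove 0) Fin.succ = B.submatrix Fin.succ Fin.succ := by
        ext i j
        simp [Matrix.submatrix_apply, Fin.succAbove_zero, Matrix.updateCol_apply,
          Fin.succ_ne_zero]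
      rw [hsub, hB, submatrix_succ_succ, ← windowDet_eq_det]
      simp [Matrix.updateCol_apply, eZero]
    · intro i hi
      have : eZero m i = 0 := by simp [eZero, hi]
      simp [Matrix.updateCol_apply, this]
  have hhalf : ∀ k : ℤ, 0 ≤ k → halfAlpha (fun k : ℕ => α k) k = α k := by
    intro k hk
    simp only [halfAlpha]
    rw [if_neg (by omega)]
    congr 1
    omega
  have hm1 : halfAlpha (fun k : ℕ => α k) (-1) = -1 := by simp [halfAlpha]
  have h1 := hdet α (fun _ _ => rfl)
  have h2 := hdet _ hhalf
  rw [hm1] at h2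
  rw [h1, h2, hW]
  constructor
  · field_simp
    ring
  · ring
end
end
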